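/- Let X, Y be topological spaces, L : X \times X \to X, N : Y \times Y \to Y, and \phi : Y \to X continuous with dense range such that \phi(N(u,v)) = L(\phi(u),\phi(v)) for all u,v. Define the Grosse-Erdmann–Kim orbit states N^n(x,y) by N^0(x,y)=\{x,y\} and N^n = N^{n-1} \cup \{N(z,w) : z,w \in N^{n-1}\} (similarly for L). Then L^n(\phi(x),\phi(y)) \supseteq \phi(N^n(x,y)) for all n; consequently, if N is bihypercyclic with bihypercyclic vector (x,y), then L is bihypercyclic with vector (\phi(x),\phi(y)). -/
import Mathlib


/-- The Grosse-Erdmann–Kim orbit states of a bilinear map: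
`M⁰(x,y) = {x,y}`, `Mⁿ(x,y) = Mⁿ⁻¹(x,y) ∪ {M(z,w) : z,w ∈ Mⁿ⁻¹(x,y)}`. -/
def biStates {X : Type*} (M : X → X → X) (x y : X) : ℕ → Set X
  | 0 => {x, y}
  | n + 1 => biStates M x y n ∪
      {w | ∃ u ∈ biStates M x y n, ∃ v ∈ biStates M x y n, w = M u v}

/-- Quasiconjugation transfers bihypercyclicity. -/
theorem stmt_18 {X Y : Type*} [TopologicalSpace X] [TopologicalSpace Y]
    (L : X → X → X) (N : Y → Y → Y) (φ : Y → X)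
    (hφc : Continuous φ) (hφd : DenseRange φ)
    (hconj : ∀ u v : Y, φ (N u v) = L (φ u) (φ v)) (x y : Y) :
    (∀ n : ℕ, φ '' biStates N x y n ⊆ biStates L (φ x) (φ y) n) ∧
    (Dense (⋃ n : ℕ, biStates N x y n) →
      Dense (⋃ n : ℕ, biStates L (φ x) (φ y) n)) := by
  have key : ∀ n : ℕ, φ '' biStates N x y n ⊆ biStates L (φ x) (φ y) n := by
    intro n
    induction n with
    | zero =>
        rintro _ ⟨a, ha, rfl⟩
        rcases ha with rfl | rfl
        · exact Or.inl rfl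
        · exact Or.inr rfl
    | succ n ih =>
        rintro _ ⟨a, ha, rfl⟩
        rcases ha with ha | ⟨u, hu, v, hv, rfl⟩
        · exact Or.inl (ih ⟨a, ha, rfl⟩)
        · exact Or.inr ⟨φ u, ih ⟨u, hu, rfl⟩, φ v, ih ⟨v, hv, rfl⟩, hconj u v⟩
  refine ⟨key, fun hd => ?_⟩
  have h1 : Dense (φ '' ⋃ n, biStates N x y n) := hφd.dense_image hφc hd
  refine h1.mono ?_
  rw [Set.image_iUnion]
  exact Set.iUnion_mono key
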